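/- Let V be a finite set partitioned into m+1 nonempty pairwise disjoint sets V_0, …, V_m. For ρ = (ρ_0, …, ρ_m) with all ρ_j > 0, let p(ρ) be the probability that t_0 ≤ t_1 ≤ ⋯ ≤ t_m, where t_0, …, t_m are independent random variables and t_j is Gamma-distributed with shape |V_j| and rate ρ_j. Let σ be a permutation of {0, …, m}, and consider the iterated limit L_σ = lim_{ρ_{σ(1)}→0⁺} ( ⋯ ( lim_{ρ_{σ(m)}→0⁺} p(ρ) ) ⋯ ), where the innermost limit is in the variable ρ_{σ(m)} with all other coordinates fixed and positive, each successive limit is asserted to exist, and the coordinate ρ_{σ(0)} is never sent to 0. Then L_σ = 1 if σ is the identity permutation, and L_σ = 0 otherwise (for every choice of the remaining positive variable). -/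

import Mathlib

open Finset Filter MeasureTheory ProbabilityTheory

namespace Statement8Aux

open Set
open scoped ENNReal

/-- The event that the coordinates with index `≤ n` are ordered. -/
def ES (m n : ℕ) : Set (Fin (m + 1) → ℝ) :=
  {x | ∀ a b : Fin (m + 1), a ≤ b → (b : ℕ) ≤ n → x a ≤ x b}

lemma measurableSet_ES (m n : ℕ) : MeasurableSet (ES m n) := by
  have h : ES m n = ⋂ (a : Fin (m + 1)) (b : Fin (m + 1)) (_ : a ≤ b) (_ : (b : ℕ) ≤ n),
      {x : Fin (m + 1) → ℝ | x a ≤ x b} := by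
    ext x; simp [ES]
  rw [h]
  exact MeasurableSet.iInter fun a => MeasurableSet.iInter fun b =>
    MeasurableSet.iInter fun _ => MeasurableSet.iInter fun _ =>
      measurableSet_le (measurable_pi_apply a) (measurable_pi_apply b)

lemma ES_top (m : ℕ) : ES m m = {t : Fin (m + 1) → ℝ | Monotone t} := by
  ext x
  constructor
  · intro h a b hab
    exact h a b hab (Nat.lt_succ_iff.mp b.isLt)
  · intro h a b hab _
    exact h hab

lemma ES_zero (m : ℕ) : ES m 0 = univ := by
  ext x
  simp only [ES, mem_setOf_eq, mem_univ, iff_true]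
  intro a b hab hb
  have hb0 : (b : ℕ) = 0 := Nat.le_zero.mp hb
  have ha0 : (a : ℕ) = 0 := Nat.le_zero.mp (hb0 ▸ (Fin.le_def.mp hab))
  have hba : a = b := Fin.ext (by omega)
  rw [hba]

lemma ES_anti (m : ℕ) {n n' : ℕ} (h : n ≤ n') : ES m n' ⊆ ES m n :=
  fun x hx a b hab hb => hx a b hab (hb.trans h)

open Real in
lemma gamma_Iic_le {n : ℕ} (hn : 1 ≤ n) {r : ℝ} (hr0 : 0 < r) (hr1 : r ≤ 1)
    {M : ℝ} (hM : 1 ≤ M) :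
    gammaMeasure (n : ℝ) r (Iic M) ≤
      ENNReal.ofReal (r * (M ^ ((n : ℝ) - 1) / Gamma (n : ℝ))) * ENNReal.ofReal M := by
  have hM0 : (0 : ℝ) ≤ M := le_trans zero_le_one hM
  have hΓ : 0 < Gamma (n : ℝ) := Gamma_pos_of_pos (by exact_mod_cast Nat.lt_of_lt_of_le Nat.zero_lt_one hn)
  rw [gammaMeasure, withDensity_apply _ measurableSet_Iic,
    lintegral_Iic_eq_lintegral_Iio_add_Icc _ hM0,
    lintegral_gammaPDF_of_nonpos le_rfl, zero_add]
  have hbound : ∀ x ∈ Icc (0 : ℝ) M,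
      gammaPDF (n : ℝ) r x ≤ ENNReal.ofReal (r * (M ^ ((n : ℝ) - 1) / Gamma (n : ℝ))) := by
    intro x hx
    rw [gammaPDF_of_nonneg hx.1]
    apply ENNReal.ofReal_le_ofReal
    have h1 : r ^ ((n : ℝ)) ≤ r := by
      rw [Real.rpow_natCast]
      calc r ^ n ≤ r ^ 1 := pow_le_pow_of_le_one hr0.le hr1 hn
        _ = r := pow_one r
    have h2 : x ^ ((n : ℝ) - 1) ≤ M ^ ((n : ℝ) - 1) := by
      apply Real.rpow_le_rpow hx.1 hx.2
      have hn' : (1 : ℝ) ≤ (n : ℝ) := by exact_mod_cast hn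
      linarith
    have h3 : Real.exp (-(r * x)) ≤ 1 := by
      rw [Real.exp_le_one_iff]
      exact neg_nonpos.mpr (mul_nonneg hr0.le hx.1)
    have hx1 : 0 ≤ x ^ ((n : ℝ) - 1) := Real.rpow_nonneg hx.1 _
    calc r ^ ((n : ℝ)) / Gamma (n : ℝ) * x ^ ((n : ℝ) - 1) * Real.exp (-(r * x))
        ≤ r / Gamma (n : ℝ) * M ^ ((n : ℝ) - 1) * 1 := by
          apply mul_le_mul _ h3 (Real.exp_nonneg _)
            (mul_nonneg (div_nonneg hr0.le hΓ.le) (Real.rpow_nonneg hM0 _))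
          exact mul_le_mul ((div_le_div_iff_of_pos_right hΓ).mpr h1) h2 hx1
            (div_nonneg hr0.le hΓ.le)
      _ = r * (M ^ ((n : ℝ) - 1) / Gamma (n : ℝ)) := by ring
  calc ∫⁻ x in Icc (0 : ℝ) M, gammaPDF (n : ℝ) r x
      ≤ ∫⁻ _x in Icc (0 : ℝ) M,
          ENNReal.ofReal (r * (M ^ ((n : ℝ) - 1) / Gamma (n : ℝ))) :=
        setLIntegral_mono measurable_const hbound
    _ = ENNReal.ofReal (r * (M ^ ((n : ℝ) - 1) / Gamma (n : ℝ))) * volume (Icc (0 : ℝ) M) :=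
        setLIntegral_const _ _
    _ ≤ ENNReal.ofReal (r * (M ^ ((n : ℝ) - 1) / Gamma (n : ℝ))) * ENNReal.ofReal M := by
        rw [Real.volume_Icc, sub_zero]

lemma gamma_Iic_tendsto {n : ℕ} (hn : 1 ≤ n) {M : ℝ} (hM : 1 ≤ M) :
    Tendsto (fun r : ℝ => gammaMeasure (n : ℝ) r (Set.Iic M))
      (nhdsWithin 0 (Set.Ioi 0)) (nhds 0) := by
  set C : ℝ := M ^ ((n : ℝ) - 1) / Real.Gamma (n : ℝ) with hC
  have hupper : Tendsto (fun r : ℝ => ENNReal.ofReal (r * C) * ENNReal.ofReal M)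
      (nhdsWithin 0 (Set.Ioi 0)) (nhds 0) := by
    have h1 : Tendsto (fun r : ℝ => r * C) (nhdsWithin 0 (Set.Ioi 0)) (nhds 0) := by
      have := ((continuous_mul_right C).tendsto (0 : ℝ)).mono_left
        (nhdsWithin_le_nhds (s := Set.Ioi (0 : ℝ)))
      simpa using this
    have h2 : Tendsto (fun r : ℝ => ENNReal.ofReal (r * C))
        (nhdsWithin 0 (Set.Ioi 0)) (nhds 0) := by
      have := (ENNReal.continuous_ofReal.tendsto 0).comp h1
      simpa [Function.comp_def] using this
    have := ENNReal.Tendsto.mul_const (b := ENNReal.ofReal M) h2 (Or.inr ENNReal.ofReal_ne_top)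
    simpa using this
  refine tendsto_of_tendsto_of_tendsto_of_le_of_le' tendsto_const_nhds hupper ?_ ?_
  · exact Filter.Eventually.of_forall fun _ => zero_le
  · filter_upwards [Ioo_mem_nhdsGT_of_mem (Set.left_mem_Ico.mpr zero_lt_one)] with r hr
    exact gamma_Iic_le hn hr.1 hr.2.le hM

lemma pi_eval {m : ℕ} (μ : Fin (m + 1) → Measure ℝ) (h : ∀ i, IsProbabilityMeasure (μ i))
    (k : Fin (m + 1)) {S : Set ℝ} (_hS : MeasurableSet S) :
    Measure.pi μ (Function.eval k ⁻¹' S) = μ k S := by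
  haveI := h
  rw [Set.eval_preimage, Measure.pi_pi]
  rw [Finset.prod_eq_single k]
  · rw [Function.update_self]
  · intro i _ hik
    haveI := h i
    rw [Function.update_of_ne hik]
    exact measure_univ
  · intro hk
    exact absurd (Finset.mem_univ k) hk

lemma pi_ES_eq {m : ℕ} {μ ν : Fin (m + 1) → Measure ℝ}
    (hμ : ∀ i, IsProbabilityMeasure (μ i)) (hν : ∀ i, IsProbabilityMeasure (ν i))
    (n : ℕ) (h : ∀ i : Fin (m + 1), (i : ℕ) ≤ n → μ i = ν i) :
    Measure.pi μ (ES m n) = Measure.pi ν (ES m n) := by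
  classical
  haveI := hμ; haveI := hν
  set p : Fin (m + 1) → Prop := fun i => (i : ℕ) ≤ n with hp
  set A : Set ({i : Fin (m + 1) // p i} → ℝ) :=
    {y | ∀ a b : {i : Fin (m + 1) // p i}, (a : Fin (m + 1)) ≤ b → y a ≤ y b} with hA
  have hAm : MeasurableSet A := by
    have hAe : A = ⋂ (a : {i // p i}) (b : {i // p i}) (_ : (a : Fin (m + 1)) ≤ b),
        {y : {i : Fin (m + 1) // p i} → ℝ | y a ≤ y b} := by
      ext y; simp [hA]
    rw [hAe]
    exact MeasurableSet.iInter fun a => MeasurableSet.iInter fun b =>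
      MeasurableSet.iInter fun _ =>
        measurableSet_le (measurable_pi_apply _) (measurable_pi_apply _)
  have hES : ∀ κ : Fin (m + 1) → Measure ℝ, (∀ i, IsProbabilityMeasure (κ i)) →
      Measure.pi κ (ES m n) = Measure.pi (fun i : {i // p i} => κ i) A := by
    intro κ hκ
    haveI := hκ
    have hpre : ES m n = (MeasurableEquiv.piEquivPiSubtypeProd (fun _ : Fin (m + 1) => ℝ) p)
        ⁻¹' (A ×ˢ Set.univ) := by
      ext x
      simp only [Set.mem_preimage, Set.mem_prod, Set.mem_univ, and_true,
        MeasurableEquiv.piEquivPiSubtypeProd, MeasurableEquiv.coe_mk,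
        Equiv.piEquivPiSubtypeProd_apply, hA, Set.mem_setOf_eq]
      constructor
      · intro hx a b hab
        exact hx a b hab b.2
      · intro hx a b hab hb
        exact hx ⟨a, (Fin.le_def.mp hab).trans hb⟩ ⟨b, hb⟩ hab
    rw [hpre, (measurePreserving_piEquivPiSubtypeProd κ p).measure_preimage
      (hAm.prod MeasurableSet.univ).nullMeasurableSet, Measure.prod_prod, measure_univ, mul_one]
  rw [hES μ hμ, hES ν hν]
  have hfam : (fun i : {i // p i} => μ i) = fun i : {i // p i} => ν i :=
    funext fun i => h i i.2
  rw [hfam]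

lemma key {m : ℕ} (a : Fin (m + 1) → ℕ) (ha : ∀ i, 1 ≤ a i) (ρ : Fin (m + 1) → ℝ)
    (hρ : ∀ i, 0 < ρ i) (k l : Fin (m + 1)) (hkl : l ≠ k) :
    Tendsto (fun t : ℝ => Measure.pi
        (fun j => gammaMeasure (a j : ℝ) (Function.update ρ k t j))
        {x : Fin (m + 1) → ℝ | x k ≤ x l})
      (nhdsWithin 0 (Set.Ioi 0)) (nhds 0) := by
  have hcast : ∀ i : Fin (m + 1), (0 : ℝ) < (a i : ℝ) := fun i => by exact_mod_cast ha i
  rw [ENNReal.tendsto_nhds_zero]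
  intro ε hε
  haveI hνl : IsProbabilityMeasure (gammaMeasure (a l : ℝ) (ρ l)) :=
    isProbabilityMeasure_gammaMeasure (hcast l) (hρ l)
  have hε2 : (0 : ℝ≥0∞) < ε / 2 := ENNReal.div_pos hε.ne' ENNReal.ofNat_ne_top
  obtain ⟨M, hM1, hMε⟩ : ∃ M : ℝ, 1 ≤ M ∧
      gammaMeasure (a l : ℝ) (ρ l) (Set.Ici M) ≤ ε / 2 := by
    have h0 : (⋂ q : ℕ, Set.Ici ((q : ℕ) : ℝ)) = ∅ := by
      ext x
      simp only [Set.mem_iInter, Set.mem_Ici, Set.mem_empty_iff_false, iff_false, not_forall,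
        not_le]
      obtain ⟨q, hq⟩ := exists_nat_gt x
      exact ⟨q, hq⟩
    have htend := tendsto_measure_iInter_atTop (μ := gammaMeasure (a l : ℝ) (ρ l))
      (s := fun q : ℕ => Set.Ici ((q : ℕ) : ℝ))
      (fun q => measurableSet_Ici.nullMeasurableSet)
      (fun i j hij => Set.Ici_subset_Ici.mpr (by exact_mod_cast hij))
      ⟨0, measure_ne_top _ _⟩
    rw [h0, measure_empty] at htend
    have := (htend.eventually_lt_const hε2).and (eventually_ge_atTop 1)
    obtain ⟨q, hq1, hq2⟩ := this.exists
    exact ⟨(q : ℝ), by exact_mod_cast hq2, hq1.le⟩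
  have hgamma := gamma_Iic_tendsto (n := a k) (ha k) hM1
  rw [ENNReal.tendsto_nhds_zero] at hgamma
  filter_upwards [hgamma (ε / 2) hε2, self_mem_nhdsWithin] with t hgt ht
  haveI hall : ∀ j, IsProbabilityMeasure
      (gammaMeasure (a j : ℝ) (Function.update ρ k t j)) := by
    intro j
    apply isProbabilityMeasure_gammaMeasure (hcast j)
    rcases eq_or_ne j k with rfl | hj
    · rw [Function.update_self]; exact ht
    · rw [Function.update_of_ne hj]; exact hρ j
  have hsub : {x : Fin (m + 1) → ℝ | x k ≤ x l} ⊆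
      (Function.eval k ⁻¹' Set.Iic M) ∪ (Function.eval l ⁻¹' Set.Ici M) := by
    intro x hx
    by_cases hxk : x k ≤ M
    · exact Or.inl hxk
    · exact Or.inr (le_trans (not_le.mp hxk).le hx)
  calc Measure.pi (fun j => gammaMeasure (a j : ℝ) (Function.update ρ k t j))
        {x : Fin (m + 1) → ℝ | x k ≤ x l}
      ≤ Measure.pi (fun j => gammaMeasure (a j : ℝ) (Function.update ρ k t j))
          ((Function.eval k ⁻¹' Set.Iic M) ∪ (Function.eval l ⁻¹' Set.Ici M)) :=
        measure_mono hsub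
    _ ≤ Measure.pi (fun j => gammaMeasure (a j : ℝ) (Function.update ρ k t j))
          (Function.eval k ⁻¹' Set.Iic M) +
        Measure.pi (fun j => gammaMeasure (a j : ℝ) (Function.update ρ k t j))
          (Function.eval l ⁻¹' Set.Ici M) := measure_union_le _ _
    _ ≤ ε / 2 + ε / 2 := by
        apply add_le_add
        · rw [pi_eval _ hall k measurableSet_Iic, Function.update_self]
          exact hgt
        · rw [pi_eval _ hall l measurableSet_Ici, Function.update_of_ne hkl]
          exact hMε
    _ = ε := ENNReal.add_halves ε

lemma caseB {m : ℕ} (a : Fin (m + 1) → ℕ) (ha : ∀ i, 1 ≤ a i) (ρ : Fin (m + 1) → ℝ)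
    (hρ : ∀ i, 0 < ρ i) (j : ℕ) (hj2 : j ≤ m) (k : Fin (m + 1)) (hk : (k : ℕ) < j) :
    Tendsto (fun t : ℝ =>
        (Measure.pi (fun i => gammaMeasure (a i : ℝ) (Function.update ρ k t i))
          (ES m j)).toReal)
      (nhdsWithin 0 (Set.Ioi 0)) (nhds 0) := by
  have hcast : ∀ i : Fin (m + 1), (0 : ℝ) < (a i : ℝ) := fun i => by exact_mod_cast ha i
  set l : Fin (m + 1) := ⟨(k : ℕ) + 1, by omega⟩ with hl
  have hkl : l ≠ k := by
    intro h
    have := congrArg Fin.val h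
    simp only [hl] at this
    omega
  have hkey := key a ha ρ hρ k l hkl
  have hsub : ES m j ⊆ {x : Fin (m + 1) → ℝ | x k ≤ x l} := by
    intro x hx
    exact hx k l (Fin.le_def.mpr (by simp [hl])) (by simp [hl]; omega)
  have hupper : Tendsto (fun t : ℝ =>
      (Measure.pi (fun i => gammaMeasure (a i : ℝ) (Function.update ρ k t i))
        {x : Fin (m + 1) → ℝ | x k ≤ x l}).toReal)
      (nhdsWithin 0 (Set.Ioi 0)) (nhds 0) := by
    have := (ENNReal.tendsto_toReal (a := 0) (by simp)).comp hkey
    simpa [Function.comp_def] using this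
  refine squeeze_zero' (Filter.Eventually.of_forall fun _ => ENNReal.toReal_nonneg) ?_ hupper
  · filter_upwards [self_mem_nhdsWithin] with t ht
    haveI hall : ∀ i, IsProbabilityMeasure
        (gammaMeasure (a i : ℝ) (Function.update ρ k t i)) := by
      intro i
      apply isProbabilityMeasure_gammaMeasure (hcast i)
      rcases eq_or_ne i k with rfl | hi
      · rw [Function.update_self]; exact ht
      · rw [Function.update_of_ne hi]; exact hρ i
    exact ENNReal.toReal_mono (measure_ne_top _ _) (measure_mono hsub)

lemma caseA {m : ℕ} (a : Fin (m + 1) → ℕ) (ha : ∀ i, 1 ≤ a i) (ρ : Fin (m + 1) → ℝ)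
    (hρ : ∀ i, 0 < ρ i) (j : ℕ) (hj1 : 1 ≤ j) (hj2 : j ≤ m)
    (kj : Fin (m + 1)) (hvk : (kj : ℕ) = j) :
    Tendsto (fun t : ℝ =>
        (Measure.pi (fun i => gammaMeasure (a i : ℝ)
            (Function.update ρ kj t i)) (ES m j)).toReal)
      (nhdsWithin 0 (Set.Ioi 0))
      (nhds ((Measure.pi (fun i => gammaMeasure (a i : ℝ) (ρ i)) (ES m (j - 1))).toReal)) := by
  have hcast : ∀ i : Fin (m + 1), (0 : ℝ) < (a i : ℝ) := fun i => by exact_mod_cast ha i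
  haveI hρprob : ∀ i, IsProbabilityMeasure (gammaMeasure (a i : ℝ) (ρ i)) :=
    fun i => isProbabilityMeasure_gammaMeasure (hcast i) (hρ i)
  set jm : Fin (m + 1) := ⟨j - 1, by omega⟩ with hjmdef
  have hjm : (jm : ℕ) = j - 1 := rfl
  have hjmkj : jm ≠ kj := by
    intro h
    have := congrArg Fin.val h
    omega
  have hkey := key a ha ρ hρ kj jm hjmkj
  set c : ℝ := (Measure.pi (fun i => gammaMeasure (a i : ℝ) (ρ i)) (ES m (j - 1))).toReal with hc
  have hincl : ES m (j - 1) ⊆ ES m j ∪ {x : Fin (m + 1) → ℝ | x kj ≤ x jm} := by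
    intro x hx
    by_cases hD : x kj ≤ x jm
    · exact Or.inr hD
    · left
      intro A B hAB hBj
      by_cases hB : (B : ℕ) ≤ j - 1
      · exact hx A B hAB hB
      · have hBval : (B : ℕ) = j := by omega
        have hBkj : B = kj := Fin.ext (by omega)
        by_cases hA : (A : ℕ) ≤ j - 1
        · have h1 : x A ≤ x jm := hx A jm (Fin.le_def.mpr (by omega))
            (by omega)
          have h2 : x jm < x kj := not_le.mp hD
          rw [hBkj]
          exact h1.trans h2.le
        · have hAval : (A : ℕ) = j := by
            have := Fin.le_def.mp hAB
            omega
          have : A = B := Fin.ext (by omega)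
          rw [this]
  have main : Tendsto (fun t : ℝ => c -
      (Measure.pi (fun i => gammaMeasure (a i : ℝ) (Function.update ρ kj t i))
        (ES m j)).toReal) (nhdsWithin 0 (Set.Ioi 0)) (nhds 0) := by
    have hupper : Tendsto (fun t : ℝ =>
        (Measure.pi (fun i => gammaMeasure (a i : ℝ) (Function.update ρ kj t i))
          {x : Fin (m + 1) → ℝ | x kj ≤ x jm}).toReal)
        (nhdsWithin 0 (Set.Ioi 0)) (nhds 0) := by
      have := (ENNReal.tendsto_toReal (a := 0) (by simp)).comp hkey
      simpa [Function.comp_def] using this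
    refine squeeze_zero' ?_ ?_ hupper
    · filter_upwards [self_mem_nhdsWithin] with t ht
      haveI hall : ∀ i, IsProbabilityMeasure
          (gammaMeasure (a i : ℝ) (Function.update ρ kj t i)) := by
        intro i
        apply isProbabilityMeasure_gammaMeasure (hcast i)
        rcases eq_or_ne i kj with rfl | hi
        · rw [Function.update_self]; exact ht
        · rw [Function.update_of_ne hi]; exact hρ i
      have heq : Measure.pi (fun i => gammaMeasure (a i : ℝ) (Function.update ρ kj t i))
          (ES m (j - 1)) = Measure.pi (fun i => gammaMeasure (a i : ℝ) (ρ i)) (ES m (j - 1)) := by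
        apply pi_ES_eq hall hρprob
        intro i hi
        have : i ≠ kj := by
          intro h
          have := congrArg Fin.val h
          omega
        rw [Function.update_of_ne this]
      rw [sub_nonneg, hc, ← heq]
      exact ENNReal.toReal_mono (measure_ne_top _ _)
        (measure_mono (ES_anti m (Nat.sub_le j 1)))
    · filter_upwards [self_mem_nhdsWithin] with t ht
      haveI hall : ∀ i, IsProbabilityMeasure
          (gammaMeasure (a i : ℝ) (Function.update ρ kj t i)) := by
        intro i
        apply isProbabilityMeasure_gammaMeasure (hcast i)
        rcases eq_or_ne i kj with rfl | hi
        · rw [Function.update_self]; exact ht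
        · rw [Function.update_of_ne hi]; exact hρ i
      have heq : Measure.pi (fun i => gammaMeasure (a i : ℝ) (Function.update ρ kj t i))
          (ES m (j - 1)) = Measure.pi (fun i => gammaMeasure (a i : ℝ) (ρ i)) (ES m (j - 1)) := by
        apply pi_ES_eq hall hρprob
        intro i hi
        have : i ≠ kj := by
          intro h
          have := congrArg Fin.val h
          omega
        rw [Function.update_of_ne this]
      set μt := Measure.pi (fun i => gammaMeasure (a i : ℝ) (Function.update ρ kj t i)) with hμt
      have hle : μt (ES m (j - 1)) ≤ μt (ES m j) + μt {x : Fin (m + 1) → ℝ | x kj ≤ x jm} :=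
        le_trans (measure_mono hincl) (measure_union_le _ _)
    -- c - f t ≤ toReal (μt D)
      have h1 : c = (μt (ES m (j - 1))).toReal := by rw [hc, heq]
      have h2 : (μt (ES m (j - 1))).toReal ≤
          (μt (ES m j)).toReal + (μt {x : Fin (m + 1) → ℝ | x kj ≤ x jm}).toReal := by
        have := ENNReal.toReal_mono (by
          exact ENNReal.add_ne_top.mpr ⟨measure_ne_top _ _, measure_ne_top _ _⟩) hle
        rwa [ENNReal.toReal_add (measure_ne_top _ _) (measure_ne_top _ _)] at this
      rw [h1]
      linarith
  have hfinal := tendsto_const_nhds (x := c) (f := nhdsWithin (0:ℝ) (Set.Ioi 0)) |>.sub main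
  simpa using hfinal

end Statement8Aux

/-- Let `V` be partitioned into `m+1` nonempty parts (surjective
`idx : V → Fin (m+1)`), and let `p(ρ)` be the probability that `t_0 ≤ ⋯ ≤ t_m` for
independent `t_j ~ Gamma(|V_j|, ρ_j)`.  For a permutation `σ` of `{0,…,m}`, the iterated
limit `L_σ = lim_{ρ_{σ(1)}→0⁺}(⋯(lim_{ρ_{σ(m)}→0⁺} p(ρ))⋯)` exists at each stage and its
value is `1` if `σ = id` and `0` otherwise, for every choice of the remaining positive
variable: there is a tower `L` with `L m = p`, each `L (j-1)` the one-sided limit of `L j`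
in the variable `ρ_{σ(j)}` at every positive point, and `L 0 = (if σ = 1 then 1 else 0)`
on the positive orthant. -/
theorem statement8 {V : Type*} [Fintype V] [DecidableEq V] (m : ℕ)
    (idx : V → Fin (m + 1)) (hidx : Function.Surjective idx)
    (σ : Equiv.Perm (Fin (m + 1)))
    (p : (Fin (m + 1) → ℝ) → ℝ)
    (hp : ∀ ρ : Fin (m + 1) → ℝ,
      p ρ = ((Measure.pi fun j =>
          gammaMeasure ((Finset.univ.filter (fun i => idx i = j)).card : ℝ) (ρ j))
            {t : Fin (m + 1) → ℝ | Monotone t}).toReal) :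
    ∃ L : ℕ → (Fin (m + 1) → ℝ) → ℝ,
      L m = p ∧
      (∀ (j : ℕ) (hj1 : 1 ≤ j) (hj2 : j ≤ m), ∀ ρ : Fin (m + 1) → ℝ,
        (∀ j', 0 < ρ j') →
        Tendsto (fun t : ℝ => L j (Function.update ρ (σ ⟨j, by omega⟩) t))
          (nhdsWithin 0 (Set.Ioi 0)) (nhds (L (j - 1) ρ))) ∧
      (∀ ρ : Fin (m + 1) → ℝ, (∀ j', 0 < ρ j') →
        L 0 ρ = if σ = 1 then 1 else 0) := by
  classical
  set a : Fin (m + 1) → ℕ := fun j => (Finset.univ.filter (fun i => idx i = j)).card with ha_def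
  have ha : ∀ j, 1 ≤ a j := by
    intro j
    obtain ⟨v, hv⟩ := hidx j
    have hv' : v ∈ Finset.univ.filter (fun i => idx i = j) := by simp [hv]
    exact Finset.card_pos.mpr ⟨v, hv'⟩
  have hcast : ∀ i : Fin (m + 1), (0 : ℝ) < (a i : ℝ) := fun i => by exact_mod_cast ha i
  set G : ℕ → Prop := fun n => ∀ i : Fin (m + 1), n < (i : ℕ) → σ i = i with hG_def
  refine ⟨fun n ρ => if G n then
      (Measure.pi (fun i => gammaMeasure (a i : ℝ) (ρ i)) (Statement8Aux.ES m n)).toReal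
    else 0, ?_, ?_, ?_⟩
  · funext ρ
    have hGm : G m := by
      intro i hi
      exact absurd (Nat.lt_succ_iff.mp i.isLt) (by omega)
    simp only [if_pos hGm, Statement8Aux.ES_top, hp]
    rfl
  · intro j hj1 hj2 ρ hρ
    by_cases hGj : G j
    · by_cases hfix : ((σ (⟨j, by omega⟩ : Fin (m + 1)) : Fin (m + 1)) : ℕ) = j
      · have hGj1 : G (j - 1) := by
          intro i hi
          rcases Nat.lt_or_ge j (i : ℕ) with h | h
          · exact hGj i h
          · have hij : (i : ℕ) = j := by omega
            have hik : i = (⟨j, by omega⟩ : Fin (m + 1)) := Fin.ext (by simpa using hij)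
            rw [hik]
            exact Fin.ext (by simpa using hfix)
        simp only [if_pos hGj, if_pos hGj1]
        exact Statement8Aux.caseA a ha ρ hρ j hj1 hj2 _ hfix
      · have hk : ((σ (⟨j, by omega⟩ : Fin (m + 1)) : Fin (m + 1)) : ℕ) < j := by
          rcases Nat.lt_or_ge ((σ (⟨j, by omega⟩ : Fin (m + 1)) : Fin (m + 1)) : ℕ) j with h | h
          · exact h
          · rcases Nat.eq_or_lt_of_le h with heq | hlt
            · exact absurd heq.symm hfix
            · have h1 := hGj (σ (⟨j, by omega⟩ : Fin (m + 1))) hlt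
              have h2 := σ.injective h1
              exact absurd (congrArg Fin.val h2) (by simpa using hfix)
        have hGj1 : ¬ G (j - 1) := by
          intro hG1
          have := hG1 (⟨j, by omega⟩ : Fin (m + 1)) (by simpa using by omega : j - 1 < j)
          exact hfix (by rw [this])
        simp only [if_pos hGj, if_neg hGj1]
        exact Statement8Aux.caseB a ha ρ hρ j hj2 _ hk
    · have hGj1 : ¬ G (j - 1) := by
        intro hG1
        exact hGj fun i hi => hG1 i (lt_of_le_of_lt (Nat.sub_le j 1) hi)
      simp only [if_neg hGj, if_neg hGj1]
      exact tendsto_const_nhds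
  · intro ρ hρ
    haveI hρprob : ∀ i, IsProbabilityMeasure (gammaMeasure (a i : ℝ) (ρ i)) :=
      fun i => isProbabilityMeasure_gammaMeasure (hcast i) (hρ i)
    by_cases hσ : σ = 1
    · have hG0 : G 0 := by
        intro i _
        rw [hσ]; rfl
      simp only [if_pos hσ, if_pos hG0, Statement8Aux.ES_zero]
      simp [measure_univ]
    · have hG0 : ¬ G 0 := by
        intro hG0
        apply hσ
        have h0 : σ 0 = 0 := by
          by_contra h
          have h1 : ((σ 0 : Fin (m + 1)) : ℕ) ≠ 0 := by
            intro hc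
            exact h (Fin.ext (by simpa using hc))
          have := hG0 (σ 0) (Nat.pos_of_ne_zero h1)
          exact h (σ.injective this)
        ext i
        rcases Nat.eq_zero_or_pos (i : ℕ) with h | h
        · have hi0 : i = 0 := Fin.ext (by simpa using h)
          rw [hi0, h0]; rfl
        · rw [hG0 i h]; rfl
      simp only [if_neg hσ, if_neg hG0]
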